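/- Let k and l be odd coprime positive integers with 0 < l < k, m = 2k, q = 2^m, g a primitive element of GF(q), r = g^{2^k - 1}, and d = (2^{lk}+1)/(2^l+1). Then δ = r^d is a primitive element of GF(4) ⊆ GF(q); in particular δ² = δ + 1 = δ^{-1} and δ ≠ 1. -/

import Mathlib

/-- `(a+1) ∣ a^n + 1` for odd `n`. -/
lemma aux_add_one_dvd (a n : ℕ) (hn : Odd n) : (a + 1) ∣ a ^ n + 1 := by
  have h : ((a : ℤ) - (-1)) ∣ (a : ℤ) ^ n - (-1) ^ n := sub_dvd_pow_sub_pow _ _ n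
  rw [hn.neg_one_pow, sub_neg_eq_add, sub_neg_eq_add] at h
  exact_mod_cast h

/-- LTE at 3: `v₃(2^n+1) = 1 + v₃(n)` for odd `n`. -/
lemma aux_v3 (n : ℕ) (hn : Odd n) :
    padicValNat 3 (2 ^ n + 1) = 1 + padicValNat 3 n := by
  haveI : Fact (Nat.Prime 3) := ⟨by norm_num⟩
  have h := padicValNat.pow_add_pow (p := 3) (x := 2) (y := 1)
    (by decide) (by norm_num) (by norm_num) hn
  simpa [padicValNat_self] using h

theorem delta_primitive_in_GF4 (k l : ℕ) (hk : Odd k) (hl : Odd l) (hl0 : 0 < l)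
    (hlk : l < k) (hco : Nat.Coprime k l)
    (F : Type) [Field F] [Fintype F] (hF : Fintype.card F = 2 ^ (2 * k))
    (g : F) (hg : ∀ x : F, x ≠ 0 → ∃ n : ℕ, x = g ^ n)
    (r : F) (hr : r = g ^ (2 ^ k - 1))
    (d : ℕ) (hd : d = (2 ^ (l * k) + 1) / (2 ^ l + 1)) :
    (r ^ d) ^ 2 = r ^ d + 1 ∧ r ^ d + 1 = (r ^ d)⁻¹ ∧ r ^ d ≠ 1 := by
  haveI : Fact (Nat.Prime 3) := ⟨by norm_num⟩
  have hk1 : 1 < k := lt_of_le_of_lt hl0 hlk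
  set N : ℕ := 2 ^ k + 1 with hN
  set L : ℕ := 2 ^ l + 1 with hL
  set X : ℕ := 2 ^ (l * k) + 1 with hX
  -- divisibilities
  have hLX : L ∣ X := by
    have := aux_add_one_dvd (2 ^ l) k hk
    rwa [← pow_mul] at this
  have hNX : N ∣ X := by
    have := aux_add_one_dvd (2 ^ k) l hl
    rwa [← pow_mul, mul_comm k l] at this
  have hdX : L * d = X := by rw [hd]; exact Nat.mul_div_cancel' hLX
  have h3N : 3 ∣ N := by simpa using aux_add_one_dvd 2 k hk
  have h3L : 3 ∣ L := by simpa using aux_add_one_dvd 2 l hl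
  -- gcd N L = 3
  have hgcd3 : Nat.gcd N L = 3 := by
    refine Nat.dvd_antisymm ?_ (Nat.dvd_gcd h3N h3L)
    obtain ⟨m, -, hm⟩ := Nat.exists_mul_mod_eq_one_of_coprime hco.symm hk1
    have hlm : l * m = k * (l * m / k) + 1 := by
      have := Nat.div_add_mod (l * m) k
      omega
    set t := l * m / k with ht
    have hA : Nat.gcd N L ∣ 2 ^ (2 * (l * m)) - 1 := by
      have s1 : L ∣ 2 ^ (2 * l) - 1 := by
        have h' : 2 ^ (2 * l) - 1 = (2 ^ l + 1) * (2 ^ l - 1) := by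
          rw [show 2 ^ (2 * l) = (2 ^ l) ^ 2 by rw [← pow_mul, mul_comm]]
          simpa using Nat.sq_sub_sq (2 ^ l) 1
        rw [h']; exact Dvd.intro _ rfl
      have s2 : 2 ^ (2 * l) - 1 ∣ 2 ^ (2 * (l * m)) - 1 := by
        have := Nat.sub_dvd_pow_sub_pow (2 ^ (2 * l)) 1 m
        simpa [← pow_mul, mul_assoc] using this
      exact (Nat.gcd_dvd_right N L).trans (s1.trans s2)
    have hB : Nat.gcd N L ∣ 2 ^ (2 * (k * t)) - 1 := by
      have s1 : N ∣ 2 ^ (2 * k) - 1 := by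
        have h' : 2 ^ (2 * k) - 1 = (2 ^ k + 1) * (2 ^ k - 1) := by
          rw [show 2 ^ (2 * k) = (2 ^ k) ^ 2 by rw [← pow_mul, mul_comm]]
          simpa using Nat.sq_sub_sq (2 ^ k) 1
        rw [h']; exact Dvd.intro _ rfl
      have s2 : 2 ^ (2 * k) - 1 ∣ 2 ^ (2 * (k * t)) - 1 := by
        have := Nat.sub_dvd_pow_sub_pow (2 ^ (2 * k)) 1 t
        simpa [← pow_mul, mul_assoc] using this
      exact (Nat.gcd_dvd_left N L).trans (s1.trans s2)
    have key : 2 ^ (2 * (l * m)) - 1 = 4 * (2 ^ (2 * (k * t)) - 1) + 3 := by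
      have h1 : 2 ^ (2 * (l * m)) = 4 * 2 ^ (2 * (k * t)) := by
        rw [hlm]
        ring
      have h2 : 1 ≤ 2 ^ (2 * (k * t)) := Nat.one_le_two_pow
      omega
    have : Nat.gcd N L ∣ 4 * (2 ^ (2 * (k * t)) - 1) + 3 := key ▸ hA
    exact (Nat.dvd_add_right (Dvd.dvd.mul_left hB 4)).mp this
  -- N ∣ 3 * d
  obtain ⟨N', hN'⟩ := h3N
  obtain ⟨L', hL'⟩ := h3L
  have hcop' : Nat.Coprime N' L' := by
    have : 3 * Nat.gcd N' L' = 3 := by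
      rw [← Nat.gcd_mul_left, ← hN', ← hL', hgcd3]
    unfold Nat.Coprime; omega
  have hN3d : N ∣ 3 * d := by
    have h1 : N ∣ L * d := hdX ▸ hNX
    rw [hN', hL'] at h1
    rw [show 3 * L' * d = 3 * (L' * d) by ring] at h1
    have h2 : N' ∣ L' * d := (Nat.mul_dvd_mul_iff_left (by norm_num : 0 < 3)).mp h1
    have h3 : N' ∣ d := hcop'.dvd_of_dvd_mul_left h2
    rw [hN']
    exact mul_dvd_mul_left 3 h3
  -- ¬ N ∣ d via 3-adic valuation
  have hNnd : ¬ N ∣ d := by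
    intro hdvd
    have hk0 : k ≠ 0 := by omega
    have hl0' : l ≠ 0 := by omega
    have hd0 : d ≠ 0 := by
      intro h
      rw [h, mul_zero] at hdX
      have hX0 : 0 < X := by rw [hX]; positivity
      omega
    have hvN : padicValNat 3 N = 1 + padicValNat 3 k := aux_v3 k hk
    have hvL : padicValNat 3 L = 1 + padicValNat 3 l := aux_v3 l hl
    have hvX : padicValNat 3 X = 1 + (padicValNat 3 l + padicValNat 3 k) := by
      rw [hX, aux_v3 (l * k) (hl.mul hk), padicValNat.mul hl0' hk0]
    have hvmul : padicValNat 3 L + padicValNat 3 d = padicValNat 3 X := by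
      rw [← hdX, padicValNat.mul (by positivity) hd0]
    have hvd : padicValNat 3 d = padicValNat 3 k := by omega
    have hpowN : (3 : ℕ) ^ (1 + padicValNat 3 k) ∣ N := by
      rw [← hvN]; exact pow_padicValNat_dvd
    have hpowd : (3 : ℕ) ^ (padicValNat 3 d + 1) ∣ d := by
      rw [hvd, add_comm]; exact hpowN.trans hdvd
    have := Nat.pow_succ_factorization_not_dvd hd0 (by norm_num : Nat.Prime 3)
    rw [Nat.factorization_def d (by norm_num : Nat.Prime 3)] at this
    exact this hpowd
  -- field part
  set q : ℕ := 2 ^ (2 * k) with hq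
  have hq4 : 4 ≤ q := by
    calc (4:ℕ) = 2 ^ 2 := by norm_num
    _ ≤ 2 ^ (2 * k) := Nat.pow_le_pow_right (by norm_num) (by omega)
  obtain ⟨z, hz⟩ := IsCyclic.exists_generator (α := Fˣ)
  have hzord : orderOf (z : F) = q - 1 := by
    rw [orderOf_units, orderOf_eq_card_of_forall_mem_zpowers hz, Nat.card_units,
      Nat.card_eq_fintype_card, hF]
  obtain ⟨n, hn⟩ := hg (z : F) (Units.ne_zero z)
  have hg0 : g ≠ 0 := by
    intro h
    rw [h] at hn
    rcases Nat.eq_zero_or_pos n with h0 | h0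
    · rw [h0, pow_zero] at hn
      rw [hn, orderOf_one] at hzord
      omega
    · exact Units.ne_zero z (hn.trans (zero_pow (by omega)))
  have horder : orderOf g = q - 1 := by
    refine Nat.dvd_antisymm ?_ ?_
    · apply orderOf_dvd_of_pow_eq_one
      have := FiniteField.pow_card_sub_one_eq_one g hg0
      rwa [hF] at this
    · rw [← hzord, hn]
      exact orderOf_pow_dvd n
  have hiff : ∀ m : ℕ, g ^ m = 1 ↔ (q - 1) ∣ m := by
    intro m
    rw [← horder, orderOf_dvd_iff_pow_eq_one]
  have hMN : (2 ^ k - 1) * N = q - 1 := by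
    have : q = (2 ^ k) ^ 2 := by rw [hq, ← pow_mul, mul_comm]
    rw [this, show (2^k)^2 - 1 = (2^k)^2 - 1^2 by norm_num, Nat.sq_sub_sq, hN,
      mul_comm]
  have hM0 : 0 < 2 ^ k - 1 := by
    have : (2:ℕ) ≤ 2 ^ k := Nat.le_self_pow (by omega) 2
    omega
  -- δ³ = 1
  have hdelta3 : (r ^ d) ^ 3 = 1 := by
    rw [hr, ← pow_mul, ← pow_mul, hiff, ← hMN]
    rw [show (2 ^ k - 1) * (d * 3) = (2 ^ k - 1) * (3 * d) from by ring]
    exact Nat.mul_dvd_mul_left _ hN3d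
  -- δ ≠ 1
  have hdne : r ^ d ≠ 1 := by
    intro h
    rw [hr, ← pow_mul, hiff, ← hMN] at h
    exact hNnd ((Nat.mul_dvd_mul_iff_left hM0).mp h)
  -- characteristic 2
  have htwo : (2 : F) = 0 := by
    have hc := FiniteField.cast_card_eq_zero F
    rw [hF, hq] at hc
    push_cast at hc
    exact (pow_eq_zero_iff (by omega : 2 * k ≠ 0)).mp hc
  -- final algebra
  have hplus_ne : r ^ d + 1 ≠ 0 := by
    intro h
    exact hdne (by linear_combination h - htwo)
  have hsum : (r ^ d) ^ 2 + r ^ d + 1 = 0 := by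
    have hfac : (r ^ d + 1) * ((r ^ d) ^ 2 + r ^ d + 1) = 0 := by
      linear_combination hdelta3 + ((r ^ d) ^ 2 + r ^ d + 1) * htwo
    rcases mul_eq_zero.mp hfac with h | h
    · exact absurd h hplus_ne
    · exact h
  refine ⟨?_, ?_, hdne⟩
  · linear_combination hsum - (r ^ d + 1) * htwo
  · refine eq_inv_of_mul_eq_one_left ?_
    linear_combination hsum - htwo
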